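/- Let (X_s)_{0<s≤1} and (Y_s)_{0<s≤1} be scales of Banach spaces equipped with an operator h of size τ > 0. Let a ≥ 1 be an integer and B, C', C'' constants with C'' ≥ 1, and let C ≥ max{1, 36·a^{a−2}·B·C''·e^a}. Suppose given: (i) h-linear operators F_{n,s} : X_s → Y_s (n ≥ 0), compatible with inclusions, with ‖F_{n,s}‖ ≤ C'·Cⁿ·n!/(1−s)ⁿ; (ii) for all 0 < s < s' < 1 and n ≥ 0, h-linear operators G_{n,s',s} : Y_{s'} → X_s, compatible with inclusions, with ‖G_{n,s',s}‖ ≤ (B/(s'−s)^a)·Cⁿ·n!/(1−s')ⁿ, such that for all N ≥ 0 and s < s', Σ_{j+m=N, j,m≥0} F_{j,s} ∘ G_{m,s',s} equals 0 if N ≥ 1 and equals the inclusion Y_{s'} ↪ Y_s if N = 0; (iii) h-linear operators H_{n,s} : X_s → Y_s (n ≥ 0), compatible with inclusions, with ‖H_{n,s}‖ ≤ C''·Cⁿ·n!/(1−s)ⁿ; (iv) elements v_n = (v_{n,s}) ∈ Ẏ₁ (n ≥ 0) with ‖v_{n,s}‖ ≤ Cⁿ·n!/(1−s)ⁿ. Then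 there exist u_n = (u_{n,s}) ∈ X̊₁ (n ≥ 0) with ‖u_{n,s}‖ ≤ C^{n+a+1}·(n+a+1)!/(1−s)^{n+a+1} such that, for every s with τC/(1−s) < 1, the operator series F_s = Σ_{n≥0} hⁿ F_{n,s} and H_s = Σ_{n≥0} hⁿ H_{n,s} converge in operator norm, the series v = Σ_{n≥0} hⁿ v_{n,s} ∈ Y_s and u = Σ_{n≥0} hⁿ u_{n,s} ∈ X_s converge absolutely, and (F_s + h^a·H_s)(u) = v in Y_s. -/

import Mathlib

namespace Stmt14Aux

/-- The intermediate scale parameter used at step `n`. -/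
noncomputable def sg (n : ℕ) (s : ℝ) : ℝ := s + (1 - s) / (n + 2)

lemma sg_lt (n : ℕ) {s : ℝ} (hs : s < 1) : s < sg n s := by
  have h2 : (0:ℝ) < (n:ℝ) + 2 := by positivity
  have : 0 < (1 - s) / (n + 2) := div_pos (by linarith) h2
  unfold sg; linarith

lemma sg_lt_one (n : ℕ) {s : ℝ} (hs : s < 1) : sg n s < 1 := by
  have h2 : (0:ℝ) < (n:ℝ) + 2 := by positivity
  have h1 : (1 - s) / (n + 2) < 1 - s := by
    rw [div_lt_iff₀ h2]
    nlinarith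
  unfold sg; linarith

lemma sg_sub (n : ℕ) (s : ℝ) : sg n s - s = (1 - s) / (n + 2) := by unfold sg; ring

lemma one_sub_sg (n : ℕ) (s : ℝ) : 1 - sg n s = (1 - s) * ((n + 1) / (n + 2)) := by
  have h2 : ((n:ℝ) + 2) ≠ 0 := by positivity
  unfold sg; field_simp; ring

lemma sg_mono (n : ℕ) {s₂ s : ℝ} (h : s₂ ≤ s) : sg n s₂ ≤ sg n s := by
  have h2 : (0:ℝ) < (n:ℝ) + 2 := by positivity
  unfold sg
  have key : (s₂ - s) * (1 - 1 / ((n:ℝ) + 2)) ≤ 0 := by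
    have h4 : (1:ℝ) / ((n:ℝ) + 2) ≤ 1 := by
      rw [div_le_one h2]; linarith
    have h5 : 0 ≤ 1 - 1 / ((n:ℝ) + 2) := by linarith
    exact mul_nonpos_of_nonpos_of_nonneg (by linarith) h5
  have : s₂ + (1 - s₂) / (n + 2) - (s + (1 - s) / (n + 2)) = (s₂ - s) * (1 - 1/((n:ℝ)+2)) := by
    field_simp; ring
  linarith

lemma fac_mid : ∀ j N : ℕ, 1 ≤ j → j + 1 ≤ N →
    j.factorial * (N - j).factorial ≤ (N - 1).factorial := by
  intro j
  induction j with
  | zero => intro N h; omega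
  | succ j ih =>
    intro N _ hN
    rcases Nat.eq_zero_or_pos j with hj | hj
    · subst hj
      have h1 : N - (0 + 1) = N - 1 := by omega
      rw [h1]
      norm_num
    · have h1 : j.factorial * (N - 1 - j).factorial ≤ (N - 1 - 1).factorial :=
        ih (N - 1) hj (by omega)
      have h2 : N - (j+1) = N - 1 - j := by omega
      rw [h2, Nat.factorial_succ]
      calc (j+1) * j.factorial * (N-1-j).factorial
          = (j+1) * (j.factorial * (N-1-j).factorial) := by ring
        _ ≤ (j+1) * (N-2).factorial := by
            have : N - 1 - 1 = N - 2 := by omega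
            exact Nat.mul_le_mul_left _ (this ▸ h1)
        _ ≤ (N-1) * (N-2).factorial := Nat.mul_le_mul_right _ (by omega)
        _ = (N-1).factorial := by
            have : N - 1 = Nat.succ (N - 2) := by omega
            rw [this, Nat.factorial_succ]

lemma fac_sum (N : ℕ) :
    ∑ j ∈ Finset.range (N + 1), j.factorial * (N - j).factorial ≤ 3 * N.factorial := by
  rcases Nat.lt_or_ge N 2 with hN | hN
  · interval_cases N <;> decide
  · have hset : Finset.range (N+1) = insert 0 (insert N (Finset.Ioo 0 N)) := by
      ext x
      simp only [Finset.mem_range, Finset.mem_insert, Finset.mem_Ioo]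
      omega
    rw [hset, Finset.sum_insert, Finset.sum_insert]
    · have hbound : ∑ j ∈ Finset.Ioo 0 N, j.factorial * (N - j).factorial
          ≤ ∑ _j ∈ Finset.Ioo 0 N, (N-1).factorial := by
        refine Finset.sum_le_sum fun j hj => ?_
        have hj' := Finset.mem_Ioo.mp hj
        exact fac_mid j N hj'.1 (by omega)
      have hcard : (Finset.Ioo 0 N).card = N - 1 := by
        rw [Nat.card_Ioo]; omega
      rw [Finset.sum_const, hcard, smul_eq_mul] at hbound
      have h3 : (N - 1) * (N-1).factorial ≤ N.factorial := by
        calc (N-1) * (N-1).factorial ≤ N * (N-1).factorial := Nat.mul_le_mul_right _ (by omega)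
          _ = N.factorial := by
              conv_rhs => rw [show N = Nat.succ (N-1) by omega, Nat.factorial_succ]
              congr 2
              omega
      have e0 : Nat.factorial 0 * (N - 0).factorial = N.factorial := by simp
      have eN : N.factorial * (N - N).factorial = N.factorial := by simp
      rw [e0, eN]
      linarith [hbound, h3]
    · simp only [Finset.mem_insert, Finset.mem_Ioo]
      omega
    · simp only [Finset.mem_insert, Finset.mem_Ioo]
      omega

lemma fac_pow (m b : ℕ) : (m + 1) ^ b * m.factorial ≤ (m + b).factorial := by
  induction b with
  | zero => simp
  | succ b ih =>
    calc (m+1)^(b+1) * m.factorial = (m+1) * ((m+1)^b * m.factorial) := by ring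
      _ ≤ (m+1) * (m+b).factorial := Nat.mul_le_mul_left _ ih
      _ ≤ (m+b+1) * (m+b).factorial := Nat.mul_le_mul_right _ (by omega)
      _ = (m+b+1).factorial := (Nat.factorial_succ _).symm

lemma fac_ratio (n b : ℕ) : (n + b).factorial ≤ n.factorial * (n + b + 1) ^ b := by
  induction b with
  | zero => simp
  | succ b ih =>
    calc (n+b+1).factorial = (n+b+1) * (n+b).factorial := Nat.factorial_succ _
      _ ≤ (n+b+1) * (n.factorial * (n+b+1)^b) := Nat.mul_le_mul_left _ ih
      _ ≤ (n+b+2) * (n.factorial * (n+b+2)^b) := by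
          exact Nat.mul_le_mul (by omega) (Nat.mul_le_mul_left _ (Nat.pow_le_pow_left (by omega) _))
      _ = n.factorial * (n+b+2)^(b+1) := by ring

lemma fac_add_le (j m : ℕ) : j.factorial * m.factorial ≤ (j + m).factorial :=
  Nat.le_of_dvd (Nat.factorial_pos _) (Nat.factorial_mul_factorial_dvd_factorial_add j m)

variable {X Y : ℝ → Type*}
  [∀ s, NormedAddCommGroup (X s)] [∀ s, NormedSpace ℝ (X s)]
  [∀ s, NormedAddCommGroup (Y s)] [∀ s, NormedSpace ℝ (Y s)]

/-- The recursively defined Gevrey coefficients of the solution. -/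
noncomputable def mkU (a : ℕ) (Gop : ℕ → ∀ s' s : ℝ, Y s' →L[ℝ] X s)
    (Hop : ℕ → ∀ s : ℝ, X s →L[ℝ] Y s) (v : ℕ → ∀ s : ℝ, Y s) :
    ℕ → ∀ s : ℝ, X s
  | n => fun s =>
    ∑ k ∈ Finset.range (n + 1),
      Gop (n - k) (sg n s) s
        (v k (sg n s) -
          ∑ p ∈ Finset.HasAntidiagonal.antidiagonal (k - a),
            if h : p.2 < n ∧ a ≤ k then
              Hop p.1 (sg n s) (mkU a Gop Hop v p.2 (sg n s)) else 0)
  termination_by n => n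
  decreasing_by exact h.1

/-- The right-hand sides of the recursion. -/
noncomputable def mkW (a : ℕ) (Gop : ℕ → ∀ s' s : ℝ, Y s' →L[ℝ] X s)
    (Hop : ℕ → ∀ s : ℝ, X s →L[ℝ] Y s) (v : ℕ → ∀ s : ℝ, Y s) (k : ℕ) (t : ℝ) : Y t :=
  v k t -
    if a ≤ k then
      ∑ p ∈ Finset.HasAntidiagonal.antidiagonal (k - a), Hop p.1 t (mkU a Gop Hop v p.2 t)
    else 0

lemma mkU_eq (a : ℕ) (ha : 1 ≤ a) (Gop : ℕ → ∀ s' s : ℝ, Y s' →L[ℝ] X s)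
    (Hop : ℕ → ∀ s : ℝ, X s →L[ℝ] Y s) (v : ℕ → ∀ s : ℝ, Y s) (n : ℕ) (s : ℝ) :
    mkU a Gop Hop v n s =
      ∑ k ∈ Finset.range (n + 1),
        Gop (n - k) (sg n s) s (mkW a Gop Hop v k (sg n s)) := by
  rw [mkU]
  refine Finset.sum_congr rfl fun k hk => ?_
  congr 1
  unfold mkW
  congr 1
  by_cases hak : a ≤ k
  · rw [if_pos hak]
    refine Finset.sum_congr rfl fun p hp => ?_
    have hp2 : p.2 ≤ k - a := by
      have := Finset.HasAntidiagonal.mem_antidiagonal.mp hp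
      omega
    have hkn : k ≤ n := by simpa using Nat.lt_succ_iff.mp (Finset.mem_range.mp hk)
    rw [dif_pos ⟨by omega, hak⟩]
  · rw [if_neg hak]
    have hka : k - a = 0 := by omega
    rw [hka]
    simp only [Finset.Nat.antidiagonal_zero, Finset.sum_singleton]
    rw [dif_neg (by omega)]

end Stmt14Aux

set_option maxHeartbeats 1000000 in
theorem stmt14
    -- scales of Banach spaces (X_s), (Y_s), 0 < s ≤ 1
    {X Y : ℝ → Type*}
    [∀ s, NormedAddCommGroup (X s)] [∀ s, NormedSpace ℝ (X s)] [∀ s, CompleteSpace (X s)]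
    [∀ s, NormedAddCommGroup (Y s)] [∀ s, NormedSpace ℝ (Y s)] [∀ s, CompleteSpace (Y s)]
    (incX : ∀ s' s : ℝ, X s →L[ℝ] X s')
    (incY : ∀ s' s : ℝ, Y s →L[ℝ] Y s')
    (hincX_norm : ∀ s' s : ℝ, 0 < s' → s' ≤ s → s ≤ 1 → ∀ x : X s, ‖incX s' s x‖ ≤ ‖x‖)
    (hincY_norm : ∀ s' s : ℝ, 0 < s' → s' ≤ s → s ≤ 1 → ∀ y : Y s, ‖incY s' s y‖ ≤ ‖y‖)
    (hincX_id : ∀ s : ℝ, incX s s = ContinuousLinearMap.id ℝ (X s))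
    (hincY_id : ∀ s : ℝ, incY s s = ContinuousLinearMap.id ℝ (Y s))
    (hincX_comp : ∀ s'' s' s : ℝ, 0 < s'' → s'' ≤ s' → s' ≤ s → s ≤ 1 →
      (incX s'' s').comp (incX s' s) = incX s'' s)
    (hincY_comp : ∀ s'' s' s : ℝ, 0 < s'' → s'' ≤ s' → s' ≤ s → s ≤ 1 →
      (incY s'' s').comp (incY s' s) = incY s'' s)
    -- the operator h of size τ
    (τ : ℝ) (hτ : 0 < τ)
    (hX : ∀ s : ℝ, X s →L[ℝ] X s) (hY : ∀ s : ℝ, Y s →L[ℝ] Y s)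
    (hhX_norm : ∀ s : ℝ, 0 < s → s ≤ 1 → ∀ n : ℕ, 1 ≤ n → ∀ x : X s,
      ‖(hX s ^ n) x‖ ≤ τ ^ n / n.factorial * ‖x‖)
    (hhY_norm : ∀ s : ℝ, 0 < s → s ≤ 1 → ∀ n : ℕ, 1 ≤ n → ∀ y : Y s,
      ‖(hY s ^ n) y‖ ≤ τ ^ n / n.factorial * ‖y‖)
    (hhX_comm : ∀ s' s : ℝ, 0 < s' → s' ≤ s → s ≤ 1 →
      (incX s' s).comp (hX s) = (hX s').comp (incX s' s))
    (hhY_comm : ∀ s' s : ℝ, 0 < s' → s' ≤ s → s ≤ 1 →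
      (incY s' s).comp (hY s) = (hY s').comp (incY s' s))
    -- constants
    (a : ℕ) (ha : 1 ≤ a) (B C' C'' C : ℝ) (hC'' : 1 ≤ C'')
    (hC : C ≥ max 1 (36 * (a : ℝ) ^ ((a : ℤ) - 2) * B * C'' * Real.exp a))
    -- (i) the operators F_{n,s}
    (Fop : ℕ → ∀ s : ℝ, X s →L[ℝ] Y s)
    (hFop_inc : ∀ (n : ℕ) (s' s : ℝ), 0 < s' → s' ≤ s → s ≤ 1 →
      (incY s' s).comp (Fop n s) = (Fop n s').comp (incX s' s))
    (hFop_h : ∀ (n : ℕ) (s : ℝ), 0 < s → s ≤ 1 →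
      (Fop n s).comp (hX s) = (hY s).comp (Fop n s))
    (hFop_norm : ∀ (n : ℕ) (s : ℝ), 0 < s → s < 1 →
      ‖Fop n s‖ ≤ C' * C ^ n * n.factorial / (1 - s) ^ n)
    -- (ii) the operators G_{n,s',s} : Y_{s'} → X_s for s < s'
    (Gop : ℕ → ∀ s' s : ℝ, Y s' →L[ℝ] X s)
    (hGop_incX : ∀ (n : ℕ) (s₂ s s' : ℝ), 0 < s₂ → s₂ ≤ s → s < s' → s' < 1 →
      (incX s₂ s).comp (Gop n s' s) = Gop n s' s₂)
    (hGop_incY : ∀ (n : ℕ) (s s' s'' : ℝ), 0 < s → s < s' → s' ≤ s'' → s'' < 1 →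
      (Gop n s' s).comp (incY s' s'') = Gop n s'' s)
    (hGop_h : ∀ (n : ℕ) (s s' : ℝ), 0 < s → s < s' → s' < 1 →
      (Gop n s' s).comp (hY s') = (hX s).comp (Gop n s' s))
    (hGop_norm : ∀ (n : ℕ) (s s' : ℝ), 0 < s → s < s' → s' < 1 →
      ‖Gop n s' s‖ ≤ B / (s' - s) ^ a * (C ^ n * n.factorial / (1 - s') ^ n))
    -- Σ_{j+m=N} F_{j,s} ∘ G_{m,s',s} = (if N = 0 then the inclusion Y_{s'} ↪ Y_s else 0)
    (hFG : ∀ (N : ℕ) (s s' : ℝ), 0 < s → s < s' → s' < 1 →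
      (∑ p ∈ Finset.HasAntidiagonal.antidiagonal N, (Fop p.1 s).comp (Gop p.2 s' s)) =
        if N = 0 then incY s s' else 0)
    -- (iii) the operators H_{n,s}
    (Hop : ℕ → ∀ s : ℝ, X s →L[ℝ] Y s)
    (hHop_inc : ∀ (n : ℕ) (s' s : ℝ), 0 < s' → s' ≤ s → s ≤ 1 →
      (incY s' s).comp (Hop n s) = (Hop n s').comp (incX s' s))
    (hHop_h : ∀ (n : ℕ) (s : ℝ), 0 < s → s ≤ 1 →
      (Hop n s).comp (hX s) = (hY s).comp (Hop n s))
    (hHop_norm : ∀ (n : ℕ) (s : ℝ), 0 < s → s < 1 →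
      ‖Hop n s‖ ≤ C'' * C ^ n * n.factorial / (1 - s) ^ n)
    -- (iv) the elements v_n ∈ Ẏ₁
    (v : ℕ → ∀ s : ℝ, Y s)
    (hv_inc : ∀ (n : ℕ) (s' s : ℝ), 0 < s' → s' ≤ s → s < 1 → incY s' s (v n s) = v n s')
    (hv_bound : ∀ (n : ℕ) (s : ℝ), 0 < s → s < 1 →
      ‖v n s‖ ≤ C ^ n * n.factorial / (1 - s) ^ n) :
    ∃ u : ℕ → ∀ s : ℝ, X s,
      (∀ (n : ℕ) (s' s : ℝ), 0 < s' → s' ≤ s → s < 1 → incX s' s (u n s) = u n s') ∧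
      (∀ (n : ℕ) (s : ℝ), 0 < s → s < 1 →
        ‖u n s‖ ≤ C ^ (n + a + 1) * (n + a + 1).factorial / (1 - s) ^ (n + a + 1)) ∧
      ∀ s : ℝ, 0 < s → s < 1 → τ * C / (1 - s) < 1 →
        -- the operator series F_s = Σ hⁿ F_{n,s}, H_s = Σ hⁿ H_{n,s} converge in operator norm
        ∃ (Fs Hs : X s →L[ℝ] Y s),
          HasSum (fun n : ℕ => (hY s ^ n).comp (Fop n s)) Fs ∧
          HasSum (fun n : ℕ => (hY s ^ n).comp (Hop n s)) Hs ∧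
          -- v = Σ hⁿ v_{n,s} and u = Σ hⁿ u_{n,s} converge absolutely
          Summable (fun n : ℕ => ‖(hY s ^ n) (v n s)‖) ∧
          Summable (fun n : ℕ => ‖(hX s ^ n) (u n s)‖) ∧
          ∃ (vs : Y s) (us : X s),
            HasSum (fun n : ℕ => (hY s ^ n) (v n s)) vs ∧
            HasSum (fun n : ℕ => (hX s ^ n) (u n s)) us ∧
            -- (F_s + h^a·H_s)(u) = v
            Fs us + (hY s ^ a) (Hs us) = vs := by
  classical
  have hC1 : (1:ℝ) ≤ C := le_trans (le_max_left _ _) hC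
  have hCpos : (0:ℝ) < C := lt_of_lt_of_le one_pos hC1
  have hC''pos : (0:ℝ) < C'' := lt_of_lt_of_le one_pos hC''
  -- B is nonnegative
  have hB : 0 ≤ B := by
    by_contra hB0
    push_neg at hB0
    have h1 := hGop_norm 0 (1/4) (1/2) (by norm_num) (by norm_num) (by norm_num)
    have h2 : (C ^ (0:ℕ) * ((Nat.factorial 0 : ℕ) : ℝ) / (1 - 1/2) ^ (0:ℕ)) = 1 := by norm_num
    rw [h2, mul_one] at h1
    have h3 : B / ((1/2:ℝ) - 1/4) ^ a < 0 :=
      div_neg_of_neg_of_pos hB0 (pow_pos (by norm_num) a)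
    exact absurd (le_trans (norm_nonneg _) h1) (not_le.mpr h3)
  set U : ℕ → ∀ s : ℝ, X s := Stmt14Aux.mkU a Gop Hop v with hUdef
  set W : ∀ _k : ℕ, ∀ t : ℝ, Y t := Stmt14Aux.mkW a Gop Hop v with hWdef0
  have hWdef : ∀ k t, W k t =
      v k t - (if a ≤ k then
        ∑ p ∈ Finset.HasAntidiagonal.antidiagonal (k - a), Hop p.1 t (U p.2 t) else 0) :=
    fun k t => rfl
  have hUeq : ∀ n s, U n s = ∑ k ∈ Finset.range (n+1),
      Gop (n-k) (Stmt14Aux.sg n s) s (W k (Stmt14Aux.sg n s)) :=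
    fun n s => Stmt14Aux.mkU_eq a ha Gop Hop v n s
  -- compatibility with the inclusions
  have hcompat : ∀ n s₂ s, 0 < s₂ → s₂ ≤ s → s < 1 → incX s₂ s (U n s) = U n s₂ := by
    intro n
    induction n using Nat.strong_induction_on with
    | _ n ih =>
      have hW : ∀ k, k ≤ n → ∀ t₂ t, 0 < t₂ → t₂ ≤ t → t < 1 →
          incY t₂ t (W k t) = W k t₂ := by
        intro k hk t₂ t ht₂ hle ht
        rw [hWdef, hWdef, map_sub, hv_inc k t₂ t ht₂ hle ht]
        congr 1
        by_cases hak : a ≤ k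
        · rw [if_pos hak, if_pos hak, map_sum]
          refine Finset.sum_congr rfl fun p hp => ?_
          have hp2 : p.2 < n := by
            have := Finset.HasAntidiagonal.mem_antidiagonal.mp hp
            omega
          have h1 := DFunLike.congr_fun (hHop_inc p.1 t₂ t ht₂ hle (le_of_lt ht)) (U p.2 t)
          simp only [ContinuousLinearMap.comp_apply] at h1
          rw [h1, ih p.2 hp2 t₂ t ht₂ hle ht]
        · rw [if_neg hak, if_neg hak, map_zero]
      intro s₂ s hs₂ hle hs
      have hs₂1 : s₂ < 1 := lt_of_le_of_lt hle hs
      have h1 : s₂ < Stmt14Aux.sg n s₂ := Stmt14Aux.sg_lt n hs₂1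
      have h2 : Stmt14Aux.sg n s₂ ≤ Stmt14Aux.sg n s := Stmt14Aux.sg_mono n hle
      have h3 : Stmt14Aux.sg n s < 1 := Stmt14Aux.sg_lt_one n hs
      rw [hUeq n s, hUeq n s₂, map_sum]
      refine Finset.sum_congr rfl fun k hk => ?_
      have hkn : k ≤ n := Nat.lt_succ_iff.mp (Finset.mem_range.mp hk)
      have e1 := DFunLike.congr_fun
        (hGop_incX (n-k) s₂ s (Stmt14Aux.sg n s) hs₂ hle (Stmt14Aux.sg_lt n hs) h3)
        (W k (Stmt14Aux.sg n s))
      simp only [ContinuousLinearMap.comp_apply] at e1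
      rw [e1]
      have e2 := DFunLike.congr_fun
        (hGop_incY (n-k) s₂ (Stmt14Aux.sg n s₂) (Stmt14Aux.sg n s) hs₂ h1 h2 h3)
        (W k (Stmt14Aux.sg n s))
      simp only [ContinuousLinearMap.comp_apply] at e2
      rw [← e2, hW k hkn (Stmt14Aux.sg n s₂) (Stmt14Aux.sg n s) (lt_trans hs₂ h1) h2 h3]
  -- compatibility of W
  have hWcompat : ∀ k t₂ t, 0 < t₂ → t₂ ≤ t → t < 1 → incY t₂ t (W k t) = W k t₂ := by
    intro k t₂ t ht₂ hle ht
    rw [hWdef, hWdef, map_sub, hv_inc k t₂ t ht₂ hle ht]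
    congr 1
    by_cases hak : a ≤ k
    · rw [if_pos hak, if_pos hak, map_sum]
      refine Finset.sum_congr rfl fun p hp => ?_
      have h1 := DFunLike.congr_fun (hHop_inc p.1 t₂ t ht₂ hle (le_of_lt ht)) (U p.2 t)
      simp only [ContinuousLinearMap.comp_apply] at h1
      rw [h1, hcompat p.2 t₂ t ht₂ hle ht]
    · rw [if_neg hak, if_neg hak, map_zero]
  have hGWindep : ∀ (m k : ℕ) (s t₂ t : ℝ), 0 < s → s < t₂ → t₂ ≤ t → t < 1 →
      Gop m t₂ s (W k t₂) = Gop m t s (W k t) := by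
    intro m k s t₂ t hs ht₂ hle ht
    rw [← hWcompat k t₂ t (lt_trans hs ht₂) hle ht]
    have h1 := DFunLike.congr_fun (hGop_incY m s t₂ t hs ht₂ hle ht) (W k t)
    simp only [ContinuousLinearMap.comp_apply] at h1
    rw [h1]
  have hUformula : ∀ (n : ℕ) (s t : ℝ), 0 < s → s < t → t < 1 →
      U n s = ∑ k ∈ Finset.range (n+1), Gop (n-k) t s (W k t) := by
    intro n s t hs hst ht
    have hs1 : s < 1 := lt_trans hst ht
    rw [hUeq n s]
    refine Finset.sum_congr rfl fun k _ => ?_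
    have h1 : s < min t (Stmt14Aux.sg n s) := lt_min hst (Stmt14Aux.sg_lt n hs1)
    rw [← hGWindep (n-k) k s (min t (Stmt14Aux.sg n s)) (Stmt14Aux.sg n s) hs h1
        (min_le_right _ _) (Stmt14Aux.sg_lt_one n hs1),
      hGWindep (n-k) k s (min t (Stmt14Aux.sg n s)) t hs h1 (min_le_left _ _) ht]
  -- numeric key inequality
  have hBC'' : (0:ℝ) ≤ B * C'' := mul_nonneg hB (le_of_lt hC''pos)
  have h12e : 12 * Real.exp 1 * (B * C'') ≤ C := by
    have hX1 : (1:ℝ) ≤ (a:ℝ) ^ ((a:ℤ) - 2) := by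
      rcases eq_or_lt_of_le ha with h | h
      · rw [← h]; norm_num
      · have h2 : (2:ℕ) ≤ a := h
        have he : ((a:ℤ) - 2) = ((a - 2 : ℕ) : ℤ) := by omega
        rw [he, zpow_natCast]
        exact one_le_pow₀ (by exact_mod_cast ha)
    have h1 : 12 * Real.exp 1 ≤ 36 * ((a:ℝ) ^ ((a:ℤ) - 2) * Real.exp a) := by
      have he1 : Real.exp 1 ≤ Real.exp a := Real.exp_le_exp.mpr (by exact_mod_cast ha)
      have he0 : 0 < Real.exp 1 := Real.exp_pos 1
      nlinarith [Real.exp_pos (a:ℝ)]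
    have h2 : 12 * Real.exp 1 * (B*C'') ≤ 36 * ((a:ℝ)^((a:ℤ)-2) * Real.exp a) * (B*C'') :=
      mul_le_mul_of_nonneg_right h1 hBC''
    have h3 : 36 * ((a:ℝ)^((a:ℤ)-2) * Real.exp a) * (B*C'')
        = 36 * (a:ℝ)^((a:ℤ)-2) * B * C'' * Real.exp a := by ring
    rw [h3] at h2
    exact le_trans h2 (le_trans (le_max_right 1 _) hC)
  have hCa : 12 * Real.exp 1 * (B * C'') ≤ C ^ a :=
    le_trans h12e (le_self_pow₀ hC1 (by omega))
  -- the norm bound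
  have hbound : ∀ (n : ℕ) (s : ℝ), 0 < s → s < 1 →
      ‖U n s‖ ≤ C ^ (n+a+1) * ((n+a+1).factorial : ℝ) / (1-s) ^ (n+a+1) := by
    intro n
    induction n using Nat.strong_induction_on with
    | _ n ih =>
      intro s hs0 hs1
      set t := Stmt14Aux.sg n s with htdef
      have hst : s < t := Stmt14Aux.sg_lt n hs1
      have ht1 : t < 1 := Stmt14Aux.sg_lt_one n hs1
      have ht0 : 0 < t := lt_trans hs0 hst
      have h1t : 0 < 1 - t := by linarith
      have h1s : 0 < 1 - s := by linarith
      have hts0 : 0 < t - s := by linarith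
      -- the bound on ‖W k t‖
      have hWb : ∀ k, k ≤ n →
          ‖W k t‖ ≤ 4 * C'' * (C ^ (k+1) * ((k+1).factorial : ℝ) / (1-t) ^ (k+1)) := by
        intro k hk
        have hE0 : (0:ℝ) ≤ C ^ (k+1) * ((k+1).factorial : ℝ) / (1-t) ^ (k+1) := by positivity
        have hv1 : ‖v k t‖ ≤ C ^ (k+1) * ((k+1).factorial:ℝ) / (1-t)^(k+1) := by
          refine le_trans (hv_bound k t ht0 ht1) ?_
          refine div_le_div₀ (by positivity) ?_ (by positivity) ?_
          · have hfk : (k.factorial:ℝ) ≤ ((k+1).factorial:ℝ) := by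
              exact_mod_cast Nat.factorial_le (Nat.le_succ k)
            have hCk : C^k ≤ C^(k+1) := pow_le_pow_right₀ hC1 (Nat.le_succ k)
            exact mul_le_mul hCk hfk (by positivity) (by positivity)
          · exact pow_le_pow_of_le_one (le_of_lt h1t) (by linarith) (Nat.le_succ k)
        rw [hWdef]
        by_cases hak : a ≤ k
        · rw [if_pos hak]
          have hsum : ‖∑ p ∈ Finset.HasAntidiagonal.antidiagonal (k-a), Hop p.1 t (U p.2 t)‖
              ≤ 3 * C'' * (C ^ (k+1) * ((k+1).factorial:ℝ) / (1-t)^(k+1)) := by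
            refine le_trans (norm_sum_le _ _) ?_
            have hterm : ∀ p ∈ Finset.HasAntidiagonal.antidiagonal (k-a),
                ‖Hop p.1 t (U p.2 t)‖ ≤
                  C'' * C^(k+1) / (1-t)^(k+1) *
                    ((p.1.factorial : ℝ) * ((p.2+a+1).factorial : ℝ)) := by
              intro p hp
              have hpe : p.1 + p.2 = k - a := Finset.HasAntidiagonal.mem_antidiagonal.mp hp
              have hp2n : p.2 < n := by omega
              have h2 := hHop_norm p.1 t ht0 ht1
              have h3 := ih p.2 hp2n t ht0 ht1
              calc ‖Hop p.1 t (U p.2 t)‖ ≤ ‖Hop p.1 t‖ * ‖U p.2 t‖ :=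
                  ContinuousLinearMap.le_opNorm _ _
                _ ≤ (C'' * C ^ p.1 * (p.1.factorial:ℝ) / (1-t) ^ p.1) *
                    (C ^ (p.2+a+1) * ((p.2+a+1).factorial:ℝ) / (1-t) ^ (p.2+a+1)) :=
                  mul_le_mul h2 h3 (norm_nonneg _) (le_trans (norm_nonneg _) h2)
                _ = C'' * C^(p.1 + (p.2+a+1)) / (1-t)^(p.1 + (p.2+a+1)) *
                    ((p.1.factorial:ℝ) * ((p.2+a+1).factorial:ℝ)) := by
                    rw [pow_add, pow_add]
                    field_simp
                    ring
                _ = _ := by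
                    have he : p.1 + (p.2 + a + 1) = k + 1 := by omega
                    rw [he]
            refine le_trans (Finset.sum_le_sum hterm) ?_
            rw [← Finset.mul_sum]
            have hfacsum : (∑ p ∈ Finset.HasAntidiagonal.antidiagonal (k-a),
                (p.1.factorial:ℝ) * ((p.2+a+1).factorial:ℝ)) ≤ 3 * ((k+1).factorial : ℝ) := by
              have hnat : (∑ p ∈ Finset.HasAntidiagonal.antidiagonal (k-a),
                  p.1.factorial * (p.2+a+1).factorial) ≤ 3 * (k+1).factorial := by
                rw [Finset.Nat.sum_antidiagonal_eq_sum_range_succ_mk]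
                have he : ∀ j ∈ Finset.range (k-a+1),
                    j.factorial * ((k-a-j)+a+1).factorial
                      = j.factorial * ((k+1) - j).factorial := by
                  intro j hj
                  have := Finset.mem_range.mp hj
                  congr 2
                  omega
                rw [Finset.sum_congr rfl he]
                refine le_trans (Finset.sum_le_sum_of_subset
                  (Finset.range_subset_range.mpr (by omega))) (Stmt14Aux.fac_sum (k+1))
              exact_mod_cast hnat
            calc C'' * C^(k+1)/(1-t)^(k+1) * (∑ p ∈ Finset.HasAntidiagonal.antidiagonal (k-a),
                  (p.1.factorial:ℝ) * ((p.2+a+1).factorial:ℝ))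
                ≤ C''*C^(k+1)/(1-t)^(k+1) * (3*((k+1).factorial:ℝ)) :=
                  mul_le_mul_of_nonneg_left hfacsum (by positivity)
              _ = 3 * C'' * (C^(k+1) * ((k+1).factorial:ℝ)/(1-t)^(k+1)) := by ring
          calc ‖v k t - ∑ p ∈ Finset.HasAntidiagonal.antidiagonal (k-a), Hop p.1 t (U p.2 t)‖
              ≤ ‖v k t‖ + ‖∑ p ∈ Finset.HasAntidiagonal.antidiagonal (k-a), Hop p.1 t (U p.2 t)‖ :=
                norm_sub_le _ _
            _ ≤ (C^(k+1) * ((k+1).factorial:ℝ)/(1-t)^(k+1))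
                + 3*C''*(C^(k+1) * ((k+1).factorial:ℝ)/(1-t)^(k+1)) := add_le_add hv1 hsum
            _ ≤ 4*C''*(C^(k+1) * ((k+1).factorial:ℝ)/(1-t)^(k+1)) := by
                have h5 := le_mul_of_one_le_left hE0 hC''
                linarith
        · rw [if_neg hak, sub_zero]
          refine le_trans hv1 ?_
          have h5 := le_mul_of_one_le_left hE0 hC''
          have h6 : (0:ℝ) ≤ C'' * (C^(k+1) * ((k+1).factorial:ℝ)/(1-t)^(k+1)) :=
            mul_nonneg (le_of_lt hC''pos) hE0
          linarith
      -- main estimate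
      rw [hUeq n s]
      refine le_trans (norm_sum_le _ _) ?_
      have hterm : ∀ k ∈ Finset.range (n+1),
          ‖Gop (n-k) t s (W k t)‖ ≤
            4*B*C''*C^(n+1)/((t-s)^a * (1-t)^(n+1)) *
              (((n-k).factorial:ℝ) * ((k+1).factorial:ℝ)) := by
        intro k hk
        have hkn : k ≤ n := Nat.lt_succ_iff.mp (Finset.mem_range.mp hk)
        calc ‖Gop (n-k) t s (W k t)‖ ≤ ‖Gop (n-k) t s‖ * ‖W k t‖ :=
            ContinuousLinearMap.le_opNorm _ _
          _ ≤ (B/(t-s)^a * (C^(n-k)*((n-k).factorial:ℝ)/(1-t)^(n-k))) *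
              (4*C''*(C^(k+1)*((k+1).factorial:ℝ)/(1-t)^(k+1))) :=
            mul_le_mul (hGop_norm (n-k) s t hs0 hst ht1) (hWb k hkn) (norm_nonneg _)
              (le_trans (norm_nonneg _) (hGop_norm (n-k) s t hs0 hst ht1))
          _ = 4*B*C''*(C^((n-k)+(k+1)))/((t-s)^a * (1-t)^((n-k)+(k+1))) *
              (((n-k).factorial:ℝ)*((k+1).factorial:ℝ)) := by
              rw [pow_add, pow_add]
              field_simp
              ring
          _ = _ := by
              have he : (n-k)+(k+1) = n+1 := by omega
              rw [he]
      refine le_trans (Finset.sum_le_sum hterm) ?_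
      rw [← Finset.mul_sum]
      have hfs : (∑ k ∈ Finset.range (n+1), ((n-k).factorial:ℝ) * ((k+1).factorial:ℝ))
          ≤ 3 * ((n+1).factorial:ℝ) := by
        have hnat : (∑ k ∈ Finset.range (n+1), (n-k).factorial * (k+1).factorial)
            ≤ 3*(n+1).factorial := by
          have hre : (∑ k ∈ Finset.range (n+1), (n-k).factorial * (k+1).factorial)
              = ∑ j ∈ Finset.range (n+1), j.factorial * ((n+1)-j).factorial := by
            rw [← Finset.sum_range_reflect (fun j => j.factorial * ((n+1)-j).factorial) (n+1)]
            refine Finset.sum_congr rfl fun j hj => ?_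
            have := Finset.mem_range.mp hj
            congr 2 <;> omega
          rw [hre]
          refine le_trans (Finset.sum_le_sum_of_subset
            (Finset.range_subset_range.mpr (by omega))) (Stmt14Aux.fac_sum (n+1))
        exact_mod_cast hnat
      have hT1 : (0:ℝ) ≤ 4*B*C''*C^(n+1)/((t-s)^a * (1-t)^(n+1)) := by
        have h4 : (0:ℝ) ≤ 4*B*C'' := by linarith [hBC'']
        exact div_nonneg (mul_nonneg h4 (by positivity)) (by positivity)
      refine le_trans (mul_le_mul_of_nonneg_left hfs hT1) ?_
      -- substitute t = sg n s
      have hts : t - s = (1-s)/((n:ℝ)+2) := Stmt14Aux.sg_sub n s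
      have h1t' : 1 - t = (1-s) * (((n:ℝ)+1)/((n:ℝ)+2)) := Stmt14Aux.one_sub_sg n s
      have hn1 : (0:ℝ) < (n:ℝ)+1 := by positivity
      have hn2 : (0:ℝ) < (n:ℝ)+2 := by positivity
      have hexp : (((n:ℝ)+2)/((n:ℝ)+1))^(n+1) ≤ Real.exp 1 := by
        have he : ((n:ℝ)+2)/((n:ℝ)+1) = 1 + 1/((n:ℝ)+1) := by
          field_simp
          ring
        rw [he]
        have h1 : (1:ℝ) + 1/((n:ℝ)+1) ≤ Real.exp (1/((n:ℝ)+1)) := by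
          have := Real.add_one_le_exp (1/((n:ℝ)+1))
          linarith
        calc (1 + 1/((n:ℝ)+1))^(n+1) ≤ (Real.exp (1/((n:ℝ)+1)))^(n+1) :=
            pow_le_pow_left₀ (by positivity) h1 _
          _ = Real.exp (((n+1 : ℕ):ℝ) * (1/((n:ℝ)+1))) := (Real.exp_nat_mul _ _).symm
          _ = Real.exp 1 := by
              congr 1
              push_cast
              field_simp
      have hE1 : 4*B*C''*C^(n+1)/((t-s)^a * (1-t)^(n+1)) * (3 * ((n+1).factorial:ℝ))
          = 12*B*C''*C^(n+1)*((n+1).factorial:ℝ) *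
              (((n:ℝ)+2)^a * ((((n:ℝ)+2)/((n:ℝ)+1))^(n+1))) / (1-s)^(n+a+1) := by
        rw [hts, h1t', div_pow, mul_pow, div_pow]
        rw [show (n:ℕ)+a+1 = a+(n+1) by omega, pow_add]
        simp only [div_pow]
        field_simp
        ring
      rw [hE1]
      have hE2 : 12*B*C''*C^(n+1)*((n+1).factorial:ℝ) *
          (((n:ℝ)+2)^a * ((((n:ℝ)+2)/((n:ℝ)+1))^(n+1)))
          ≤ C^(n+a+1) * ((n+a+1).factorial:ℝ) := by
        have hc1 : 12*B*C''*C^(n+1)*((n+1).factorial:ℝ) *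
            (((n:ℝ)+2)^a * ((((n:ℝ)+2)/((n:ℝ)+1))^(n+1)))
            ≤ 12*B*C''*C^(n+1)*((n+1).factorial:ℝ) * (((n:ℝ)+2)^a * Real.exp 1) := by
          have hc0 : (0:ℝ) ≤ 12*B*C''*C^(n+1)*((n+1).factorial:ℝ) * ((n:ℝ)+2)^a := by
            have h5 : (0:ℝ) ≤ 12*B*C'' := by linarith [hBC'']
            have h4 : (0:ℝ) ≤ 12*B*C''*C^(n+1)*((n+1).factorial:ℝ) :=
              mul_nonneg (mul_nonneg h5 (by positivity)) (by positivity)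
            exact mul_nonneg h4 (by positivity)
          calc 12*B*C''*C^(n+1)*((n+1).factorial:ℝ) *
              (((n:ℝ)+2)^a * ((((n:ℝ)+2)/((n:ℝ)+1))^(n+1)))
              = (12*B*C''*C^(n+1)*((n+1).factorial:ℝ) * ((n:ℝ)+2)^a) *
                ((((n:ℝ)+2)/((n:ℝ)+1))^(n+1)) := by ring
            _ ≤ (12*B*C''*C^(n+1)*((n+1).factorial:ℝ) * ((n:ℝ)+2)^a) * Real.exp 1 :=
              mul_le_mul_of_nonneg_left hexp hc0
            _ = 12*B*C''*C^(n+1)*((n+1).factorial:ℝ) * (((n:ℝ)+2)^a * Real.exp 1) := by ring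
        refine le_trans hc1 ?_
        have hfp : (((n:ℝ)+2)^a * ((n+1).factorial:ℝ)) ≤ ((n+a+1).factorial:ℝ) := by
          have h1 := Stmt14Aux.fac_pow (n+1) a
          have h2 : (n+1+a) = (n+a+1) := by omega
          rw [h2] at h1
          exact_mod_cast h1
        have hkey : (12 * Real.exp 1 * (B * C'')) * (((n:ℝ)+2)^a * ((n+1).factorial:ℝ))
            ≤ C^a * ((n+a+1).factorial:ℝ) := by
          refine mul_le_mul hCa hfp (by positivity) (by positivity)
        calc 12*B*C''*C^(n+1)*((n+1).factorial:ℝ) * (((n:ℝ)+2)^a * Real.exp 1)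
            = ((12 * Real.exp 1 * (B * C'')) * (((n:ℝ)+2)^a * ((n+1).factorial:ℝ))) * C^(n+1) := by
              ring
          _ ≤ (C^a * ((n+a+1).factorial:ℝ)) * C^(n+1) :=
              mul_le_mul_of_nonneg_right hkey (by positivity)
          _ = C^(n+a+1) * ((n+a+1).factorial:ℝ) := by
              rw [show (n:ℕ)+a+1 = a+(n+1) by omega, pow_add]
              ring
      exact (div_le_div_iff_of_pos_right (by positivity)).mpr hE2
  -- the coefficient identity
  have hcoeff : ∀ (N : ℕ) (s : ℝ), 0 < s → s < 1 →
      (∑ p ∈ Finset.HasAntidiagonal.antidiagonal N, Fop p.1 s (U p.2 s)) +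
        (if a ≤ N then ∑ p ∈ Finset.HasAntidiagonal.antidiagonal (N-a), Hop p.1 s (U p.2 s) else 0)
        = v N s := by
    intro N s hs0 hs1
    set t := Stmt14Aux.sg N s with htdef
    have hst : s < t := Stmt14Aux.sg_lt N hs1
    have ht1 : t < 1 := Stmt14Aux.sg_lt_one N hs1
    have key : (∑ p ∈ Finset.HasAntidiagonal.antidiagonal N, Fop p.1 s (U p.2 s)) = W N s := by
      have e1 : ∀ p ∈ Finset.HasAntidiagonal.antidiagonal N,
          Fop p.1 s (U p.2 s) = ∑ k ∈ Finset.range (p.2+1),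
            Fop p.1 s (Gop (p.2-k) t s (W k t)) := by
        intro p _
        rw [hUformula p.2 s t hs0 hst ht1, map_sum]
      rw [Finset.sum_congr rfl e1,
        Finset.Nat.sum_antidiagonal_eq_sum_range_succ_mk
          (fun p : ℕ × ℕ => ∑ k ∈ Finset.range (p.2+1),
            Fop p.1 s (Gop (p.2-k) t s (W k t))) N]
      have hswap : (∑ j ∈ Finset.range (N+1), ∑ k ∈ Finset.range ((N-j)+1),
            Fop j s (Gop ((N-j)-k) t s (W k t)))
          = ∑ k ∈ Finset.range (N+1), ∑ j ∈ Finset.range ((N-k)+1),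
            Fop j s (Gop ((N-j)-k) t s (W k t)) :=
        Finset.sum_comm' (fun j k => by simp only [Finset.mem_range]; omega)
      rw [hswap]
      have hinner : ∀ k ∈ Finset.range (N+1),
          (∑ j ∈ Finset.range ((N-k)+1), Fop j s (Gop ((N-j)-k) t s (W k t)))
            = (if k = N then incY s t (W k t) else 0) := by
        intro k hk
        have hkN : k ≤ N := Nat.lt_succ_iff.mp (Finset.mem_range.mp hk)
        have h1 : (∑ j ∈ Finset.range ((N-k)+1), Fop j s (Gop ((N-j)-k) t s (W k t)))
            = ∑ j ∈ Finset.range ((N-k)+1), ((Fop j s).comp (Gop ((N-k)-j) t s)) (W k t) := by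
          refine Finset.sum_congr rfl fun j hj => ?_
          have hj' := Finset.mem_range.mp hj
          have he : (N-j)-k = (N-k)-j := by omega
          rw [he]
          rfl
        rw [h1, ← Finset.Nat.sum_antidiagonal_eq_sum_range_succ_mk
            (fun p : ℕ × ℕ => ((Fop p.1 s).comp (Gop p.2 t s)) (W k t)) (N-k),
          ← ContinuousLinearMap.sum_apply, hFG (N-k) s t hs0 hst ht1]
        by_cases hkn : k = N
        · rw [if_pos (show N - k = 0 by omega), if_pos hkn]
        · rw [if_neg (show ¬ (N - k = 0) by omega), if_neg hkn]
          rfl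
      rw [Finset.sum_congr rfl hinner, Finset.sum_ite_eq' (Finset.range (N+1)) N
          (fun k => incY s t (W k t)), if_pos (Finset.self_mem_range_succ N)]
      exact hWcompat N s t hs0 (le_of_lt hst) ht1
    rw [key, hWdef]
    abel
  -- conclusion
  refine ⟨U, hcompat, hbound, ?_⟩
  intro s hs0 hs1 hq
  have h1s : (0:ℝ) < 1 - s := by linarith
  have hq0 : 0 < τ * C / (1 - s) := div_pos (mul_pos hτ hCpos) h1s
  have hgeom : Summable (fun n : ℕ => (τ * C / (1 - s)) ^ n) :=
    summable_geometric_of_lt_one (le_of_lt hq0) hq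
  have hYn : ∀ (n : ℕ) (y : Y s), ‖(hY s ^ n) y‖ ≤ τ^n / (n.factorial:ℝ) * ‖y‖ := by
    intro n y
    rcases Nat.eq_zero_or_pos n with h | h
    · subst h; simp
    · exact hhY_norm s hs0 (le_of_lt hs1) n h y
  have hXn : ∀ (n : ℕ) (x : X s), ‖(hX s ^ n) x‖ ≤ τ^n / (n.factorial:ℝ) * ‖x‖ := by
    intro n x
    rcases Nat.eq_zero_or_pos n with h | h
    · subst h; simp
    · exact hhX_norm s hs0 (le_of_lt hs1) n h x
  have hC'0 : 0 ≤ C' := by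
    have h1 := hFop_norm 0 (1/2) (by norm_num) (by norm_num)
    have h2 : C' * C^(0:ℕ) * ((Nat.factorial 0 : ℕ):ℝ) / (1 - 1/2)^(0:ℕ) = C' := by norm_num
    rw [h2] at h1
    exact le_trans (norm_nonneg _) h1
  have hopbound : ∀ (n : ℕ) (A : X s →L[ℝ] Y s) (c : ℝ),
      ‖A‖ ≤ c * C^n * (n.factorial:ℝ)/(1-s)^n →
      ‖(hY s ^ n).comp A‖ ≤ c * (τ * C / (1 - s))^n := by
    intro n A c hA
    have hc : 0 ≤ c := by
      have h0 : (0:ℝ) ≤ c * C^n * (n.factorial:ℝ)/(1-s)^n := le_trans (norm_nonneg A) hA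
      by_contra hcn
      push_neg at hcn
      have : c * C^n * (n.factorial:ℝ)/(1-s)^n < 0 := by
        apply div_neg_of_neg_of_pos _ (by positivity)
        have h1 : (0:ℝ) < C^n * (n.factorial:ℝ) := by positivity
        calc c * C^n * (n.factorial:ℝ) = c * (C^n * (n.factorial:ℝ)) := by ring
          _ < 0 := mul_neg_of_neg_of_pos hcn h1
      linarith
    refine ContinuousLinearMap.opNorm_le_bound _ (by positivity) fun x => ?_
    have hfn : ((n.factorial:ℕ):ℝ) ≠ 0 := Nat.cast_ne_zero.mpr (Nat.factorial_pos n).ne'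
    calc ‖(hY s ^ n) (A x)‖ ≤ τ^n/(n.factorial:ℝ) * ‖A x‖ := hYn n (A x)
      _ ≤ τ^n/(n.factorial:ℝ) * (‖A‖ * ‖x‖) :=
        mul_le_mul_of_nonneg_left (ContinuousLinearMap.le_opNorm A x) (by positivity)
      _ ≤ τ^n/(n.factorial:ℝ) * ((c * C^n * (n.factorial:ℝ)/(1-s)^n) * ‖x‖) :=
        mul_le_mul_of_nonneg_left (mul_le_mul_of_nonneg_right hA (norm_nonneg x))
          (by positivity)
      _ = c * (τ * C / (1 - s))^n * ‖x‖ := by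
        rw [div_pow, mul_pow]
        field_simp
  have hFsum : Summable (fun n : ℕ => (hY s ^ n).comp (Fop n s)) := by
    refine Summable.of_norm_bounded
      (hgeom.mul_left C') (fun n => hopbound n _ C' (hFop_norm n s hs0 hs1))
  have hHsum : Summable (fun n : ℕ => (hY s ^ n).comp (Hop n s)) := by
    refine Summable.of_norm_bounded
      (hgeom.mul_left C'') (fun n => hopbound n _ C'' (hHop_norm n s hs0 hs1))
  have hvb : ∀ n : ℕ, ‖(hY s ^ n) (v n s)‖ ≤ (τ * C / (1 - s))^n := by
    intro n
    have hfn : ((n.factorial:ℕ):ℝ) ≠ 0 := Nat.cast_ne_zero.mpr (Nat.factorial_pos n).ne'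
    calc ‖(hY s ^ n) (v n s)‖ ≤ τ^n/(n.factorial:ℝ) * ‖v n s‖ := hYn _ _
      _ ≤ τ^n/(n.factorial:ℝ) * (C^n*(n.factorial:ℝ)/(1-s)^n) :=
        mul_le_mul_of_nonneg_left (hv_bound n s hs0 hs1) (by positivity)
      _ = (τ * C / (1 - s))^n := by
        rw [div_pow, mul_pow]
        field_simp
  have hvsum : Summable (fun n : ℕ => ‖(hY s ^ n) (v n s)‖) :=
    Summable.of_nonneg_of_le (fun n => norm_nonneg _) hvb hgeom
  -- summability of the u-series
  have hpoly : Summable (fun n : ℕ => ((n:ℝ)+1)^(a+1) * (τ * C / (1 - s))^n) := by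
    have h0 : Summable (fun n : ℕ => (n:ℝ)^(a+1) * (τ * C / (1 - s))^n) := by
      refine summable_pow_mul_geometric_of_norm_lt_one (a+1) ?_
      rwa [Real.norm_eq_abs, abs_of_nonneg (le_of_lt hq0)]
    have h1 : Summable (fun n : ℕ => (((n+1:ℕ)):ℝ)^(a+1) * (τ * C / (1 - s))^(n+1)) :=
      (_root_.summable_nat_add_iff 1).mpr h0
    have h2 := h1.mul_right (τ * C / (1 - s))⁻¹
    refine h2.congr fun n => ?_
    push_cast
    rw [pow_succ]
    simp only [div_pow]
    field_simp
    ring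
  have hfratio : ∀ n : ℕ, ((n+a+1).factorial:ℝ)
      ≤ (n.factorial:ℝ) * (((a:ℝ)+2)^(a+1) * ((n:ℝ)+1)^(a+1)) := by
    intro n
    have h1 : (n+(a+1)).factorial ≤ n.factorial * (n+(a+1)+1)^(a+1) := Stmt14Aux.fac_ratio n (a+1)
    have hble : n+(a+1)+1 ≤ (a+2)*(n+1) := by
      have h0 : n ≤ (a+2)*n := Nat.le_mul_of_pos_left n (by omega)
      calc n+(a+1)+1 = n + (a+2) := by omega
        _ ≤ (a+2)*n + (a+2) := Nat.add_le_add_right h0 (a+2)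
        _ = (a+2)*(n+1) := by ring
    have h2 : (n+(a+1)+1)^(a+1) ≤ ((a+2)*(n+1))^(a+1) := Nat.pow_le_pow_left hble _
    have h3 : (n+a+1).factorial ≤ n.factorial * ((a+2)^(a+1)*(n+1)^(a+1)) := by
      have hh : n+(a+1) = n+a+1 := by omega
      calc (n+a+1).factorial = (n+(a+1)).factorial := by rw [hh]
        _ ≤ n.factorial * (n+(a+1)+1)^(a+1) := h1
        _ ≤ n.factorial * ((a+2)*(n+1))^(a+1) := Nat.mul_le_mul_left _ h2
        _ = n.factorial * ((a+2)^(a+1)*(n+1)^(a+1)) := by rw [mul_pow]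
    exact_mod_cast h3
  have hub : ∀ n : ℕ, ‖(hX s ^ n) (U n s)‖ ≤
      ((C/(1-s))^(a+1) * ((a:ℝ)+2)^(a+1)) * (((n:ℝ)+1)^(a+1) * (τ * C / (1 - s))^n) := by
    intro n
    have hfn : ((n.factorial:ℕ):ℝ) ≠ 0 := Nat.cast_ne_zero.mpr (Nat.factorial_pos n).ne'
    have e1 : τ^n/(n.factorial:ℝ) * (C^(n+a+1)*((n+a+1).factorial:ℝ)/(1-s)^(n+a+1))
        = (τ^n * C^(n+a+1)/((1-s)^(n+a+1) * (n.factorial:ℝ))) * ((n+a+1).factorial:ℝ) := by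
      field_simp
    have e2 : ((C/(1-s))^(a+1) * ((a:ℝ)+2)^(a+1)) * (((n:ℝ)+1)^(a+1) * (τ * C / (1 - s))^n)
        = (τ^n * C^(n+a+1)/((1-s)^(n+a+1) * (n.factorial:ℝ))) *
            ((n.factorial:ℝ) * (((a:ℝ)+2)^(a+1) * ((n:ℝ)+1)^(a+1))) := by
      rw [div_pow, div_pow, mul_pow, show (n:ℕ)+a+1 = n+(a+1) by omega, pow_add, pow_add]
      field_simp
      ring
    calc ‖(hX s ^ n) (U n s)‖ ≤ τ^n/(n.factorial:ℝ) * ‖U n s‖ := hXn _ _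
      _ ≤ τ^n/(n.factorial:ℝ) * (C^(n+a+1)*((n+a+1).factorial:ℝ)/(1-s)^(n+a+1)) :=
        mul_le_mul_of_nonneg_left (hbound n s hs0 hs1) (by positivity)
      _ = (τ^n * C^(n+a+1)/((1-s)^(n+a+1) * (n.factorial:ℝ))) * ((n+a+1).factorial:ℝ) := e1
      _ ≤ (τ^n * C^(n+a+1)/((1-s)^(n+a+1) * (n.factorial:ℝ))) *
            ((n.factorial:ℝ) * (((a:ℝ)+2)^(a+1) * ((n:ℝ)+1)^(a+1))) :=
        mul_le_mul_of_nonneg_left (hfratio n) (by positivity)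
      _ = _ := e2.symm
  have husum : Summable (fun n : ℕ => ‖(hX s ^ n) (U n s)‖) :=
    Summable.of_nonneg_of_le (fun n => norm_nonneg _) hub (hpoly.mul_left _)
  -- the sums
  have hvS : Summable (fun n : ℕ => (hY s ^ n) (v n s)) := hvsum.of_norm
  have huS : Summable (fun n : ℕ => (hX s ^ n) (U n s)) := husum.of_norm
  refine ⟨∑' n : ℕ, (hY s ^ n).comp (Fop n s), ∑' n : ℕ, (hY s ^ n).comp (Hop n s),
    hFsum.hasSum, hHsum.hasSum, hvsum, husum,
    ∑' n : ℕ, (hY s ^ n) (v n s), ∑' n : ℕ, (hX s ^ n) (U n s),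
    hvS.hasSum, huS.hasSum, ?_⟩
  -- the functional equation
  set FS : X s →L[ℝ] Y s := ∑' n : ℕ, (hY s ^ n).comp (Fop n s) with hFSdef
  set HS : X s →L[ℝ] Y s := ∑' n : ℕ, (hY s ^ n).comp (Hop n s) with hHSdef
  set us : X s := ∑' n : ℕ, (hX s ^ n) (U n s) with husdef
  set vsum : Y s := ∑' n : ℕ, (hY s ^ n) (v n s) with hvsdef
  have hFsH : HasSum (fun n : ℕ => (hY s ^ n).comp (Fop n s)) FS := hFsum.hasSum
  have hHsH : HasSum (fun n : ℕ => (hY s ^ n).comp (Hop n s)) HS := hHsum.hasSum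
  have hus : HasSum (fun n : ℕ => (hX s ^ n) (U n s)) us := huS.hasSum
  have hvs : HasSum (fun n : ℕ => (hY s ^ n) (v n s)) vsum := hvS.hasSum
  -- pointwise commutation of the operators with powers of h
  have hFhm : ∀ (j m : ℕ) (x : X s), Fop j s ((hX s ^ m) x) = (hY s ^ m) (Fop j s x) := by
    intro j m
    induction m with
    | zero => intro x; simp
    | succ m ihm =>
      intro x
      have h1 := DFunLike.congr_fun (hFop_h j s hs0 (le_of_lt hs1)) x
      simp only [ContinuousLinearMap.comp_apply] at h1
      rw [pow_succ, ContinuousLinearMap.mul_apply, pow_succ,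
        ContinuousLinearMap.mul_apply, ihm, h1]
  have hHhm : ∀ (j m : ℕ) (x : X s), Hop j s ((hX s ^ m) x) = (hY s ^ m) (Hop j s x) := by
    intro j m
    induction m with
    | zero => intro x; simp
    | succ m ihm =>
      intro x
      have h1 := DFunLike.congr_fun (hHop_h j s hs0 (le_of_lt hs1)) x
      simp only [ContinuousLinearMap.comp_apply] at h1
      rw [pow_succ, ContinuousLinearMap.mul_apply, pow_succ,
        ContinuousLinearMap.mul_apply, ihm, h1]
  have hYadd : ∀ (i j : ℕ) (y : Y s), (hY s ^ (i+j)) y = (hY s ^ i) ((hY s ^ j) y) := by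
    intro i j y
    rw [pow_add, ContinuousLinearMap.mul_apply]
  -- auxiliary nat factorial bound
  have hfrN : ∀ m : ℕ, (m+a+1).factorial ≤ m.factorial * ((a+2)^(a+1)*(m+1)^(a+1)) := by
    intro m
    have h1 : (m+(a+1)).factorial ≤ m.factorial * (m+(a+1)+1)^(a+1) := Stmt14Aux.fac_ratio m (a+1)
    have hble : m+(a+1)+1 ≤ (a+2)*(m+1) := by
      have h0 : m ≤ (a+2)*m := Nat.le_mul_of_pos_left m (by omega)
      calc m+(a+1)+1 = m + (a+2) := by omega
        _ ≤ (a+2)*m + (a+2) := Nat.add_le_add_right h0 (a+2)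
        _ = (a+2)*(m+1) := by ring
    have h2 : (m+(a+1)+1)^(a+1) ≤ ((a+2)*(m+1))^(a+1) := Nat.pow_le_pow_left hble _
    have hh : m+(a+1) = m+a+1 := by omega
    calc (m+a+1).factorial = (m+(a+1)).factorial := by rw [hh]
      _ ≤ m.factorial * (m+(a+1)+1)^(a+1) := h1
      _ ≤ m.factorial * ((a+2)*(m+1))^(a+1) := Nat.mul_le_mul_left _ h2
      _ = m.factorial * ((a+2)^(a+1)*(m+1)^(a+1)) := by rw [mul_pow]
  -- the core product estimate
  have hcore : ∀ (c : ℝ), 0 ≤ c → ∀ (A : ℕ → X s →L[ℝ] Y s),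
      (∀ n : ℕ, ‖A n‖ ≤ c * C^n * (n.factorial:ℝ)/(1-s)^n) → ∀ j m : ℕ,
      τ^(j+m)/((j+m).factorial:ℝ) * ‖A j (U m s)‖ ≤
        (c * ((C/(1-s))^(a+1) * ((a:ℝ)+2)^(a+1)) * (τ*C/(1-s))^j) *
          (((m:ℝ)+1)^(a+1) * (τ*C/(1-s))^m) := by
    intro c hc A hA j m
    have hfn : (((j+m).factorial:ℕ):ℝ) ≠ 0 := Nat.cast_ne_zero.mpr (Nat.factorial_pos _).ne'
    have h1 : ‖A j (U m s)‖ ≤ (c*C^j*(j.factorial:ℝ)/(1-s)^j) *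
        (C^(m+a+1)*((m+a+1).factorial:ℝ)/(1-s)^(m+a+1)) :=
      le_trans (ContinuousLinearMap.le_opNorm _ _)
        (mul_le_mul (hA j) (hbound m s hs0 hs1) (norm_nonneg _)
          (le_trans (norm_nonneg _) (hA j)))
    have hfac : (j.factorial:ℝ) * ((m+a+1).factorial:ℝ) ≤
        ((j+m).factorial:ℝ) * (((a:ℝ)+2)^(a+1) * ((m:ℝ)+1)^(a+1)) := by
      have h2 : j.factorial * (m+a+1).factorial ≤
          (j+m).factorial * ((a+2)^(a+1)*(m+1)^(a+1)) := by
        calc j.factorial * (m+a+1).factorial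
            ≤ j.factorial * (m.factorial * ((a+2)^(a+1)*(m+1)^(a+1))) :=
              Nat.mul_le_mul_left _ (hfrN m)
          _ = (j.factorial * m.factorial) * ((a+2)^(a+1)*(m+1)^(a+1)) := by ring
          _ ≤ (j+m).factorial * ((a+2)^(a+1)*(m+1)^(a+1)) :=
              Nat.mul_le_mul_right _ (Stmt14Aux.fac_add_le j m)
      exact_mod_cast h2
    have e1 : τ^(j+m)/((j+m).factorial:ℝ) * ((c*C^j*(j.factorial:ℝ)/(1-s)^j) *
        (C^(m+a+1)*((m+a+1).factorial:ℝ)/(1-s)^(m+a+1)))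
        = (c * (τ^(j+m)*C^(j+m+a+1)/((1-s)^(j+m+a+1) * ((j+m).factorial:ℝ)))) *
            ((j.factorial:ℝ)*((m+a+1).factorial:ℝ)) := by
      rw [show j+m+a+1 = j+(m+(a+1)) by omega]
      field_simp
      ring
    have e2 : (c * ((C/(1-s))^(a+1) * ((a:ℝ)+2)^(a+1)) * (τ*C/(1-s))^j) *
          (((m:ℝ)+1)^(a+1) * (τ*C/(1-s))^m)
        = (c * (τ^(j+m)*C^(j+m+a+1)/((1-s)^(j+m+a+1) * ((j+m).factorial:ℝ)))) *
            (((j+m).factorial:ℝ) * (((a:ℝ)+2)^(a+1)*((m:ℝ)+1)^(a+1))) := by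
      rw [show j+m+a+1 = j+(m+(a+1)) by omega]
      simp only [div_pow]
      field_simp
      ring
    calc τ^(j+m)/((j+m).factorial:ℝ) * ‖A j (U m s)‖
        ≤ τ^(j+m)/((j+m).factorial:ℝ) * ((c*C^j*(j.factorial:ℝ)/(1-s)^j) *
            (C^(m+a+1)*((m+a+1).factorial:ℝ)/(1-s)^(m+a+1))) :=
          mul_le_mul_of_nonneg_left h1 (by positivity)
      _ = (c * (τ^(j+m)*C^(j+m+a+1)/((1-s)^(j+m+a+1) * ((j+m).factorial:ℝ)))) *
            ((j.factorial:ℝ)*((m+a+1).factorial:ℝ)) := e1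
      _ ≤ (c * (τ^(j+m)*C^(j+m+a+1)/((1-s)^(j+m+a+1) * ((j+m).factorial:ℝ)))) *
            (((j+m).factorial:ℝ) * (((a:ℝ)+2)^(a+1)*((m:ℝ)+1)^(a+1))) :=
          mul_le_mul_of_nonneg_left hfac (mul_nonneg hc (by positivity))
      _ = _ := e2.symm
  -- the F-part double series
  have hTn : ∀ p : ℕ × ℕ, ‖(hY s ^ (p.1+p.2)) (Fop p.1 s (U p.2 s))‖ ≤
      (C' * ((C/(1-s))^(a+1) * ((a:ℝ)+2)^(a+1)) * (τ*C/(1-s))^p.1) *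
        (((p.2:ℝ)+1)^(a+1) * (τ*C/(1-s))^p.2) := by
    rintro ⟨j, m⟩
    exact le_trans (hYn (j+m) _)
      (hcore C' hC'0 (fun n => Fop n s) (fun n => hFop_norm n s hs0 hs1) j m)
  have hTsummableN : Summable (fun p : ℕ × ℕ =>
      ‖(hY s ^ (p.1+p.2)) (Fop p.1 s (U p.2 s))‖) := by
    refine Summable.of_nonneg_of_le (fun p => norm_nonneg _) hTn ?_
    have hmul := Summable.mul_of_nonneg
      (f := fun j : ℕ => C' * ((C/(1-s))^(a+1) * ((a:ℝ)+2)^(a+1)) * (τ*C/(1-s))^j)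
      (g := fun m : ℕ => ((m:ℝ)+1)^(a+1) * (τ*C/(1-s))^m)
      (hgeom.mul_left (C' * ((C/(1-s))^(a+1) * ((a:ℝ)+2)^(a+1)))) hpoly
      (fun j => mul_nonneg (mul_nonneg hC'0 (by positivity)) (by positivity))
      (fun m => by positivity)
    exact hmul
  have hfibF : ∀ j : ℕ, HasSum (fun m : ℕ => (hY s ^ (j+m)) (Fop j s (U m s)))
      ((hY s ^ j) (Fop j s us)) := by
    intro j
    have h1 := ContinuousLinearMap.hasSum ((hY s ^ j).comp (Fop j s)) hus
    have h2 : (fun m : ℕ => ((hY s ^ j).comp (Fop j s)) ((hX s ^ m) (U m s)))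
        = fun m : ℕ => (hY s ^ (j+m)) (Fop j s (U m s)) := by
      funext m
      rw [ContinuousLinearMap.comp_apply, hFhm, ← hYadd]
    rw [← h2]
    exact h1
  have hgF : HasSum (fun j : ℕ => (hY s ^ j) (Fop j s us)) (FS us) := by
    have h1 := ContinuousLinearMap.hasSum (ContinuousLinearMap.apply ℝ (Y s) us) hFsH
    simp only [ContinuousLinearMap.apply_apply] at h1
    have h2 : (fun n : ℕ => ((hY s ^ n).comp (Fop n s)) us)
        = fun j : ℕ => (hY s ^ j) (Fop j s us) := by
      funext j
      rw [ContinuousLinearMap.comp_apply]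
    rw [← h2]
    exact h1
  have hTsum : HasSum (fun p : ℕ × ℕ => (hY s ^ (p.1+p.2)) (Fop p.1 s (U p.2 s))) (FS us) := by
    obtain ⟨A, hA⟩ := hTsummableN.of_norm
    have h2 := hA.prod_fiberwise hfibF
    rwa [h2.unique hgF] at hA
  have hPsum : HasSum (fun N : ℕ => ∑ p ∈ Finset.HasAntidiagonal.antidiagonal N,
      (hY s ^ (p.1+p.2)) (Fop p.1 s (U p.2 s))) (FS us) := by
    have h1 : HasSum ((fun p : ℕ × ℕ => (hY s ^ (p.1+p.2)) (Fop p.1 s (U p.2 s))) ∘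
        (Finset.HasAntidiagonal.sigmaAntidiagonalEquivProd (A := ℕ))) (FS us) :=
      (Equiv.hasSum_iff _).mpr hTsum
    exact h1.sigma (fun N => Finset.hasSum _ _)
  -- the H-part double series
  have hSn : ∀ p : ℕ × ℕ, ‖(hY s ^ (p.1+p.2+a)) (Hop p.1 s (U p.2 s))‖ ≤
      (τ^a * (C'' * ((C/(1-s))^(a+1) * ((a:ℝ)+2)^(a+1))) * (τ*C/(1-s))^p.1) *
        (((p.2:ℝ)+1)^(a+1) * (τ*C/(1-s))^p.2) := by
    rintro ⟨j, m⟩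
    have hstep : τ^(j+m+a)/(((j+m+a).factorial):ℝ) ≤ τ^a * (τ^(j+m)/(((j+m).factorial):ℝ)) := by
      have hf : ((j+m).factorial:ℝ) ≤ ((j+m+a).factorial:ℝ) := by
        exact_mod_cast Nat.factorial_le (by omega : j+m ≤ j+m+a)
      have hfp : (0:ℝ) < ((j+m).factorial:ℝ) := by positivity
      calc τ^(j+m+a)/(((j+m+a).factorial):ℝ) ≤ τ^(j+m+a)/(((j+m).factorial):ℝ) :=
          div_le_div_of_nonneg_left (by positivity) hfp hf
        _ = τ^a * (τ^(j+m)/(((j+m).factorial):ℝ)) := by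
            rw [show j+m+a = (j+m)+a by omega, pow_add]
            ring
    have h0 : ‖(hY s ^ (j+m+a)) (Hop j s (U m s))‖ ≤
        τ^a * (τ^(j+m)/((j+m).factorial:ℝ) * ‖Hop j s (U m s)‖) := by
      calc ‖(hY s ^ (j+m+a)) (Hop j s (U m s))‖
          ≤ τ^(j+m+a)/(((j+m+a).factorial):ℝ) * ‖Hop j s (U m s)‖ := hYn _ _
        _ ≤ (τ^a * (τ^(j+m)/(((j+m).factorial):ℝ))) * ‖Hop j s (U m s)‖ :=
            mul_le_mul_of_nonneg_right hstep (norm_nonneg _)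
        _ = τ^a * (τ^(j+m)/((j+m).factorial:ℝ) * ‖Hop j s (U m s)‖) := by ring
    refine le_trans h0 ?_
    have h1 := hcore C'' (le_of_lt hC''pos) (fun n => Hop n s)
      (fun n => hHop_norm n s hs0 hs1) j m
    calc τ^a * (τ^(j+m)/((j+m).factorial:ℝ) * ‖Hop j s (U m s)‖)
        ≤ τ^a * ((C'' * ((C/(1-s))^(a+1) * ((a:ℝ)+2)^(a+1)) * (τ*C/(1-s))^j) *
            (((m:ℝ)+1)^(a+1) * (τ*C/(1-s))^m)) :=
          mul_le_mul_of_nonneg_left h1 (by positivity)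
      _ = (τ^a * (C'' * ((C/(1-s))^(a+1) * ((a:ℝ)+2)^(a+1))) * (τ*C/(1-s))^j) *
            (((m:ℝ)+1)^(a+1) * (τ*C/(1-s))^m) := by ring
  have hSsummableN : Summable (fun p : ℕ × ℕ =>
      ‖(hY s ^ (p.1+p.2+a)) (Hop p.1 s (U p.2 s))‖) := by
    refine Summable.of_nonneg_of_le (fun p => norm_nonneg _) hSn ?_
    have hmul := Summable.mul_of_nonneg
      (f := fun j : ℕ => τ^a * (C'' * ((C/(1-s))^(a+1) * ((a:ℝ)+2)^(a+1))) * (τ*C/(1-s))^j)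
      (g := fun m : ℕ => ((m:ℝ)+1)^(a+1) * (τ*C/(1-s))^m)
      (hgeom.mul_left (τ^a * (C'' * ((C/(1-s))^(a+1) * ((a:ℝ)+2)^(a+1))))) hpoly
      (fun j => mul_nonneg (by positivity) (by positivity))
      (fun m => by positivity)
    exact hmul
  have hfibH : ∀ j : ℕ, HasSum (fun m : ℕ => (hY s ^ (j+m+a)) (Hop j s (U m s)))
      ((hY s ^ (j+a)) (Hop j s us)) := by
    intro j
    have h1 := ContinuousLinearMap.hasSum ((hY s ^ (j+a)).comp (Hop j s)) hus
    have h2 : (fun m : ℕ => ((hY s ^ (j+a)).comp (Hop j s)) ((hX s ^ m) (U m s)))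
        = fun m : ℕ => (hY s ^ (j+m+a)) (Hop j s (U m s)) := by
      funext m
      rw [ContinuousLinearMap.comp_apply, hHhm, ← hYadd,
        show j+a+m = j+m+a by omega]
    rw [← h2]
    exact h1
  have hgH : HasSum (fun j : ℕ => (hY s ^ (j+a)) (Hop j s us)) ((hY s ^ a) (HS us)) := by
    have h0 : HasSum (fun j : ℕ => ((hY s ^ j).comp (Hop j s)) us) (HS us) := by
      have hh := ContinuousLinearMap.hasSum (ContinuousLinearMap.apply ℝ (Y s) us) hHsH
      simpa only [ContinuousLinearMap.apply_apply] using hh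
    have h1 := ContinuousLinearMap.hasSum (hY s ^ a) h0
    have h2 : (fun j : ℕ => (hY s ^ a) (((hY s ^ j).comp (Hop j s)) us))
        = fun j : ℕ => (hY s ^ (j+a)) (Hop j s us) := by
      funext j
      rw [ContinuousLinearMap.comp_apply, ← hYadd, show a+j = j+a by omega]
    rw [← h2]
    exact h1
  have hSsum : HasSum (fun p : ℕ × ℕ => (hY s ^ (p.1+p.2+a)) (Hop p.1 s (U p.2 s)))
      ((hY s ^ a) (HS us)) := by
    obtain ⟨A, hA⟩ := hSsummableN.of_norm
    have h2 := hA.prod_fiberwise hfibH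
    rwa [h2.unique hgH] at hA
  have hQsum : HasSum (fun N : ℕ => ∑ p ∈ Finset.HasAntidiagonal.antidiagonal N,
      (hY s ^ (p.1+p.2+a)) (Hop p.1 s (U p.2 s))) ((hY s ^ a) (HS us)) := by
    have h1 : HasSum ((fun p : ℕ × ℕ => (hY s ^ (p.1+p.2+a)) (Hop p.1 s (U p.2 s))) ∘
        (Finset.HasAntidiagonal.sigmaAntidiagonalEquivProd (A := ℕ))) ((hY s ^ a) (HS us)) :=
      (Equiv.hasSum_iff _).mpr hSsum
    exact h1.sigma (fun N => Finset.hasSum _ _)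
  -- shift the H-part
  have hshift : HasSum (fun N : ℕ => if a ≤ N then (∑ p ∈ Finset.HasAntidiagonal.antidiagonal (N-a),
      (hY s ^ (p.1+p.2+a)) (Hop p.1 s (U p.2 s))) else 0) ((hY s ^ a) (HS us)) := by
    have hinj : Function.Injective (fun M : ℕ => M + a) := fun x y h => add_right_cancel h
    refine (Function.Injective.hasSum_iff hinj ?_).mp ?_
    · intro N hN
      have hn : ¬ a ≤ N := by
        intro hc
        exact hN ⟨N - a, show N - a + a = N by omega⟩
      exact if_neg hn
    · have he : ((fun N : ℕ => if a ≤ N then (∑ p ∈ Finset.HasAntidiagonal.antidiagonal (N-a),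
          (hY s ^ (p.1+p.2+a)) (Hop p.1 s (U p.2 s))) else 0) ∘ (fun M : ℕ => M + a))
          = fun M : ℕ => ∑ p ∈ Finset.HasAntidiagonal.antidiagonal M,
              (hY s ^ (p.1+p.2+a)) (Hop p.1 s (U p.2 s)) := by
        funext M
        simp only [Function.comp_apply]
        rw [if_pos (by omega : a ≤ M + a), Nat.add_sub_cancel]
      rw [he]
      exact hQsum
  have htot := hPsum.add hshift
  have hfin : (fun N : ℕ => (∑ p ∈ Finset.HasAntidiagonal.antidiagonal N,
        (hY s ^ (p.1+p.2)) (Fop p.1 s (U p.2 s))) +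
      (if a ≤ N then (∑ p ∈ Finset.HasAntidiagonal.antidiagonal (N-a),
        (hY s ^ (p.1+p.2+a)) (Hop p.1 s (U p.2 s))) else 0))
      = fun N : ℕ => (hY s ^ N) (v N s) := by
    funext N
    have hTN : (∑ p ∈ Finset.HasAntidiagonal.antidiagonal N, (hY s ^ (p.1+p.2)) (Fop p.1 s (U p.2 s)))
        = (hY s ^ N) (∑ p ∈ Finset.HasAntidiagonal.antidiagonal N, Fop p.1 s (U p.2 s)) := by
      rw [map_sum]
      refine Finset.sum_congr rfl fun p hp => ?_
      have hpe : p.1 + p.2 = N := Finset.HasAntidiagonal.mem_antidiagonal.mp hp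
      rw [hpe]
    have hSN : (if a ≤ N then (∑ p ∈ Finset.HasAntidiagonal.antidiagonal (N-a),
        (hY s ^ (p.1+p.2+a)) (Hop p.1 s (U p.2 s))) else 0)
        = (hY s ^ N) (if a ≤ N then (∑ p ∈ Finset.HasAntidiagonal.antidiagonal (N-a),
            Hop p.1 s (U p.2 s)) else 0) := by
      by_cases hN : a ≤ N
      · rw [if_pos hN, if_pos hN, map_sum]
        refine Finset.sum_congr rfl fun p hp => ?_
        have hpe : p.1 + p.2 = N - a := Finset.HasAntidiagonal.mem_antidiagonal.mp hp
        have he2 : p.1 + p.2 + a = N := by omega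
        rw [he2]
      · rw [if_neg hN, if_neg hN, map_zero]
    rw [hTN, hSN, ← map_add, hcoeff N s hs0 hs1]
  rw [hfin] at htot
  exact htot.unique hvs
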